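/- arXiv:1302.5935 — 7 statements merged into one kernel-verified Lean document; each statement's English description precedes it below -/
import Mathlib

section
/- Let μ and δ be real numbers with |δ| < μ. Then for every t ∈ ℝ, (1/(2π)) ∫_ℝ e^{iEt}/((E + iδ)² + μ²) dE = e^{−|t|μ + tδ}/(2μ), where the integrand is a complex-valued function of the real variable E and the integral converges. -/
open MeasureTheory Real Set Filter FourierTransform

/- Auxiliary lemmas -/

lemma integrableOn_cexp_mul_Ioi {z : ℂ} (hz : z.re < 0) :
    IntegrableOn (fun x : ℝ => Complex.exp (z * x)) (Ioi 0) := by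
  have h := exp_neg_integrableOn_Ioi 0 (show (0:ℝ) < -z.re by linarith)
  refine h.mono' ?_ ?_
  · exact (Complex.continuous_exp.comp (by continuity)).aestronglyMeasurable
  · filter_upwards with x
    simp [Complex.norm_exp, Complex.mul_re, neg_mul]

lemma integral_cexp_mul_Ioi {z : ℂ} (hz : z.re < 0) :
    ∫ x in Ioi (0:ℝ), Complex.exp (z * x) = -z⁻¹ := by
  have hz0 : z ≠ 0 := fun h => by simp [h] at hz
  have hderiv : ∀ x ∈ Ici (0:ℝ),
      HasDerivAt (fun x : ℝ => Complex.exp (z * x) / z) (Complex.exp (z * x)) x := by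
    intro x _
    have h1 : HasDerivAt (fun x : ℝ => z * (x:ℂ)) z x := by
      simpa using ((hasDerivAt_id x).ofReal_comp).const_mul z
    have h2 := h1.cexp
    have := h2.div_const z
    simpa [mul_div_assoc, mul_div_cancel_right₀ _ hz0] using this
  have htend : Tendsto (fun x : ℝ => Complex.exp (z * x) / z) atTop (nhds 0) := by
    rw [tendsto_zero_iff_norm_tendsto_zero]
    have heq : (fun x : ℝ => ‖Complex.exp (z * x) / z‖)
        = fun x : ℝ => Real.exp (z.re * x) / ‖z‖ := by
      ext x; simp [Complex.norm_exp, Complex.mul_re]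
    rw [heq]
    have hb : Tendsto (fun x : ℝ => z.re * x) atTop atBot := by
      have h3 : Tendsto (fun x : ℝ => -z.re * x) atTop atTop := by
        simpa using (tendsto_id (α := ℝ)).const_mul_atTop (show (0:ℝ) < -z.re by linarith)
      have h4 := tendsto_neg_atTop_atBot.comp h3
      simpa [Function.comp_def, neg_mul] using h4
    simpa using ((Real.tendsto_exp_atBot.comp hb).div_const ‖z‖)
  have := integral_Ioi_of_hasDerivAt_of_tendsto' hderiv (integrableOn_cexp_mul_Ioi hz) htend
  simpa [neg_div, div_eq_mul_inv] using this

lemma integrableOn_comp_neg_Iic {E : Type*} [NormedAddCommGroup E] {f : ℝ → E} {c : ℝ}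
    (hf : IntegrableOn f (Ici c)) : IntegrableOn (fun x => f (-x)) (Iic (-c)) := by
  have A : MeasurableEmbedding (fun x : ℝ => -x) :=
    (Homeomorph.neg ℝ).isClosedEmbedding.measurableEmbedding
  have hmap : (volume : Measure ℝ).restrict (Iic (-c))
      = Measure.map (fun x : ℝ => -x) ((volume : Measure ℝ).restrict (Ici c)) := by
    conv_lhs => rw [← Measure.map_neg_eq_self (volume : Measure ℝ)]
    rw [Measure.restrict_map A.measurable measurableSet_Iic]
    congr 1
    ext x; simp
  rw [IntegrableOn, hmap, A.integrable_map_iff]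
  simpa [Function.comp_def, IntegrableOn] using hf

lemma integrable_inv_shifted_sq {k c : ℝ} (hk : k ≠ 0) (hc : 0 < c) :
    Integrable (fun x : ℝ => ((k * x) ^ 2 + c)⁻¹) := by
  have hm : 0 < min (k ^ 2) c := lt_min (by positivity) hc
  refine (integrable_inv_one_add_sq.const_mul (min (k ^ 2) c)⁻¹).mono' ?_ ?_
  · refine (Continuous.inv₀ (by continuity) fun x => ?_).aestronglyMeasurable
    positivity
  · filter_upwards with x
    have h1 : min (k ^ 2) c * (1 + x ^ 2) ≤ (k * x) ^ 2 + c := by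
      have h2 : min (k ^ 2) c * x ^ 2 ≤ k ^ 2 * x ^ 2 :=
        mul_le_mul_of_nonneg_right (min_le_left _ _) (by positivity)
      have h3 : min (k ^ 2) c ≤ c := min_le_right _ _
      nlinarith [sq_nonneg (k * x)]
    have hpos : (0:ℝ) < (k * x) ^ 2 + c := by positivity
    rw [norm_inv, Real.norm_eq_abs, abs_of_pos hpos, ← mul_inv]
    exact inv_anti₀ (by positivity) h1

section
variable (μ δ : ℝ)

noncomputable def myf (v : ℝ) : ℂ := ((Real.exp (-|v| * μ + v * δ) : ℝ) : ℂ)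

lemma myf_integrableOn_Ioi (hδ : |δ| < μ) (w : ℝ) :
    IntegrableOn (fun v : ℝ => Complex.exp (↑(-2 * π * v * w) * Complex.I) * myf μ δ v)
      (Ioi 0) := by
  have hzp : ((δ : ℂ) - μ - 2 * π * w * Complex.I).re < 0 := by
    simp [Complex.sub_re]
    have := abs_lt.mp hδ; linarith
  refine (integrableOn_cexp_mul_Ioi hzp).congr_fun ?_ measurableSet_Ioi
  intro v hv
  simp only [myf]; rw [abs_of_pos (mem_Ioi.mp hv), Complex.ofReal_exp, ← Complex.exp_add]
  congr 1
  push_cast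
  ring

lemma myf_neg_eq (w : ℝ) : ∀ v ∈ Ioi (0:ℝ),
    Complex.exp (↑(-2 * π * (-v) * w) * Complex.I) * myf μ δ (-v)
      = Complex.exp ((-((μ:ℂ) + δ) + 2 * π * w * Complex.I) * v) := by
  intro v hv
  simp only [myf]; rw [abs_neg, abs_of_pos (mem_Ioi.mp hv), Complex.ofReal_exp,
    ← Complex.exp_add]
  congr 1
  push_cast
  ring

lemma myf_integrableOn_Iic (hδ : |δ| < μ) (w : ℝ) :
    IntegrableOn (fun v : ℝ => Complex.exp (↑(-2 * π * v * w) * Complex.I) * myf μ δ v)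
      (Iic 0) := by
  have hzm : ((-((μ:ℂ) + δ) + 2 * π * w * Complex.I)).re < 0 := by
    simp [Complex.add_re]
    have := abs_lt.mp hδ; linarith
  have h1 : IntegrableOn
      (fun v : ℝ => Complex.exp (↑(-2 * π * (-v) * w) * Complex.I) * myf μ δ (-v)) (Ici 0) := by
    rw [integrableOn_Ici_iff_integrableOn_Ioi]
    exact (integrableOn_cexp_mul_Ioi hzm).congr_fun
      (fun v hv => (myf_neg_eq μ δ w v hv).symm) measurableSet_Ioi
  have := integrableOn_comp_neg_Iic h1
  simpa using this

lemma myf_integrable (hδ : |δ| < μ) : Integrable (myf μ δ) := by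
  have h0 : ∀ v : ℝ, Complex.exp (↑(-2 * π * v * 0) * Complex.I) * myf μ δ v = myf μ δ v := by
    intro v; simp
  rw [← integrableOn_univ, ← Iic_union_Ioi (a := (0:ℝ))]
  exact IntegrableOn.union
    ((myf_integrableOn_Iic μ δ hδ 0).congr_fun (fun v _ => h0 v) measurableSet_Iic)
    ((myf_integrableOn_Ioi μ δ hδ 0).congr_fun (fun v _ => h0 v) measurableSet_Ioi)

lemma fourier_myf (hδ : |δ| < μ) (w : ℝ) :
    𝓕 (myf μ δ) w
      = 2 * μ / ((((2 * π * w : ℝ) : ℂ) + Complex.I * δ) ^ 2 + (μ:ℂ) ^ 2) := by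
  have habs := abs_lt.mp hδ
  have hzp : ((δ : ℂ) - μ - 2 * π * w * Complex.I).re < 0 := by
    simp [Complex.sub_re]; linarith
  have hzm : ((-((μ:ℂ) + δ) + 2 * π * w * Complex.I)).re < 0 := by
    simp [Complex.add_re]; linarith
  rw [Real.fourier_real_eq_integral_exp_smul]
  simp only [smul_eq_mul]
  rw [← intervalIntegral.integral_Iic_add_Ioi (myf_integrableOn_Iic μ δ hδ w)
    (myf_integrableOn_Ioi μ δ hδ w)]
  have hIoi : ∫ v in Ioi (0:ℝ), Complex.exp (↑(-2 * π * v * w) * Complex.I) * myf μ δ v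
      = -((δ : ℂ) - μ - 2 * π * w * Complex.I)⁻¹ := by
    rw [setIntegral_congr_fun measurableSet_Ioi (g := fun v : ℝ =>
        Complex.exp (((δ : ℂ) - μ - 2 * π * w * Complex.I) * v)) ?_]
    · exact integral_cexp_mul_Ioi hzp
    · intro v hv
      simp only [myf]
      rw [abs_of_pos (mem_Ioi.mp hv), Complex.ofReal_exp, ← Complex.exp_add]
      congr 1; push_cast; ring
  have hIic : ∫ v in Iic (0:ℝ), Complex.exp (↑(-2 * π * v * w) * Complex.I) * myf μ δ v
      = -(-((μ:ℂ) + δ) + 2 * π * w * Complex.I)⁻¹ := by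
    have hcomp : ∫ v in Iic (0:ℝ), Complex.exp (↑(-2 * π * v * w) * Complex.I) * myf μ δ v
        = ∫ v in Ioi (0:ℝ), Complex.exp (↑(-2 * π * (-v) * w) * Complex.I) * myf μ δ (-v) := by
      have := integral_comp_neg_Ioi (0:ℝ)
        (fun v : ℝ => Complex.exp (↑(-2 * π * v * w) * Complex.I) * myf μ δ v)
      simp only [neg_zero] at this
      exact this.symm
    rw [hcomp, setIntegral_congr_fun measurableSet_Ioi (myf_neg_eq μ δ w)]
    exact integral_cexp_mul_Ioi hzm
  rw [hIoi, hIic]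
  have hA : ((μ:ℂ) - δ + 2 * π * w * Complex.I) ≠ 0 := by
    intro h
    have := congrArg Complex.re h
    simp [Complex.add_re, Complex.sub_re] at this
    linarith
  have hB : ((μ:ℂ) + δ - 2 * π * w * Complex.I) ≠ 0 := by
    intro h
    have := congrArg Complex.re h
    simp [Complex.add_re, Complex.sub_re] at this
    linarith
  have hD : (((2 * π * w : ℝ) : ℂ) + Complex.I * δ) ^ 2 + (μ:ℂ) ^ 2
      = ((μ:ℂ) - δ + 2 * π * w * Complex.I) * ((μ:ℂ) + δ - 2 * π * w * Complex.I) := by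
    push_cast
    ring_nf
    simp [Complex.I_sq]
    ring
  rw [hD]
  rw [show -((δ:ℂ) - μ - 2 * π * w * Complex.I)⁻¹ = ((μ:ℂ) - δ + 2 * π * w * Complex.I)⁻¹ by
      rw [← inv_neg]; ring_nf,
    show -(-((μ:ℂ) + δ) + 2 * π * w * Complex.I)⁻¹ = ((μ:ℂ) + δ - 2 * π * w * Complex.I)⁻¹ by
      rw [← inv_neg]; ring_nf]
  field_simp
  ring

lemma denom_re (x : ℝ) :
    ((((x : ℝ) : ℂ) + Complex.I * δ) ^ 2 + (μ:ℂ) ^ 2).re = x ^ 2 - δ ^ 2 + μ ^ 2 := by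
  simp [pow_two, Complex.add_re, Complex.mul_re, Complex.add_im, Complex.mul_im]
  try ring

lemma denom_re_pos (hδ : |δ| < μ) (x : ℝ) :
    0 < ((((x : ℝ) : ℂ) + Complex.I * δ) ^ 2 + (μ:ℂ) ^ 2).re := by
  rw [denom_re]
  have h1 : δ ^ 2 < μ ^ 2 := by
    have := abs_lt.mp hδ; nlinarith
  nlinarith [sq_nonneg x]

lemma denom_ne_zero (hδ : |δ| < μ) (x : ℝ) :
    (((x : ℝ) : ℂ) + Complex.I * δ) ^ 2 + (μ:ℂ) ^ 2 ≠ 0 := by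
  intro h
  have := denom_re_pos μ δ hδ x
  rw [h] at this
  simp at this

lemma denom_norm_ge (hδ : |δ| < μ) (x : ℝ) :
    x ^ 2 + (μ ^ 2 - δ ^ 2) ≤ ‖(((x : ℝ) : ℂ) + Complex.I * δ) ^ 2 + (μ:ℂ) ^ 2‖ := by
  have h := Complex.re_le_norm ((((x : ℝ) : ℂ) + Complex.I * δ) ^ 2 + (μ:ℂ) ^ 2)
  rw [denom_re] at h
  linarith

end

/-- For real `μ, δ` with `|δ| < μ` and any `t ∈ ℝ`, the complex integral
`(1/(2π)) ∫_ℝ e^{iEt}/((E + iδ)² + μ²) dE` converges and equals `e^{−|t|μ + tδ}/(2μ)`. -/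
theorem stmt0 (μ δ : ℝ) (hδ : |δ| < μ) (t : ℝ) :
    Integrable (fun E : ℝ =>
      Complex.exp (Complex.I * E * t) / (((E : ℂ) + Complex.I * δ) ^ 2 + (μ : ℂ) ^ 2)) ∧
    (1 / (2 * (π : ℂ))) *
        ∫ E : ℝ, Complex.exp (Complex.I * E * t) / (((E : ℂ) + Complex.I * δ) ^ 2 + (μ : ℂ) ^ 2)
      = ((Real.exp (-|t| * μ + t * δ) / (2 * μ) : ℝ) : ℂ) := by
  have hμ : 0 < μ := lt_of_le_of_lt (abs_nonneg δ) hδ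
  have hc : 0 < μ ^ 2 - δ ^ 2 := by
    have := abs_lt.mp hδ; nlinarith
  -- integrability of the integrand
  have hg_cont : Continuous (fun E : ℝ =>
      Complex.exp (Complex.I * E * t) / (((E : ℂ) + Complex.I * δ) ^ 2 + (μ : ℂ) ^ 2)) := by
    apply Continuous.div
    · exact Complex.continuous_exp.comp (by continuity)
    · continuity
    · exact fun x => denom_ne_zero μ δ hδ x
  have hnorm_exp : ∀ E : ℝ, ‖Complex.exp (Complex.I * E * t)‖ = 1 := by
    intro E
    rw [Complex.norm_exp]
    simp [Complex.mul_re]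
  have hg_int : Integrable (fun E : ℝ =>
      Complex.exp (Complex.I * E * t) / (((E : ℂ) + Complex.I * δ) ^ 2 + (μ : ℂ) ^ 2)) := by
    have hint : Integrable (fun x : ℝ => (x ^ 2 + (μ ^ 2 - δ ^ 2))⁻¹) := by
      have := integrable_inv_shifted_sq (k := 1) (c := μ ^ 2 - δ ^ 2) one_ne_zero hc
      simpa using this
    refine hint.mono' hg_cont.aestronglyMeasurable ?_
    filter_upwards with E
    rw [norm_div, hnorm_exp E, one_div]
    exact inv_anti₀ (by positivity) (denom_norm_ge μ δ hδ E)
  refine ⟨hg_int, ?_⟩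
  -- Fourier inversion
  have hFf_int : Integrable (𝓕 (myf μ δ)) := by
    have heq : 𝓕 (myf μ δ) = fun w : ℝ =>
        2 * (μ:ℂ) / ((((2 * π * w : ℝ) : ℂ) + Complex.I * δ) ^ 2 + (μ:ℂ) ^ 2) :=
      funext fun w => fourier_myf μ δ hδ w
    rw [heq]
    have hint : Integrable (fun x : ℝ => 2 * μ * ((2 * π * x) ^ 2 + (μ ^ 2 - δ ^ 2))⁻¹) := by
      exact (integrable_inv_shifted_sq (k := 2 * π) (c := μ ^ 2 - δ ^ 2)
        (by positivity) hc).const_mul (2 * μ)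
    refine hint.mono' ?_ ?_
    · apply Continuous.aestronglyMeasurable
      apply Continuous.div
      · continuity
      · continuity
      · exact fun x => denom_ne_zero μ δ hδ (2 * π * x)
    · filter_upwards with w
      rw [norm_div]
      have h1 : ‖2 * (μ:ℂ)‖ = 2 * μ := by
        rw [show 2 * (μ:ℂ) = ((2 * μ : ℝ) : ℂ) by push_cast; ring]
        rw [Complex.norm_real, Real.norm_eq_abs, abs_of_pos (by positivity)]
      rw [h1, div_eq_mul_inv]
      refine mul_le_mul_of_nonneg_left ?_ (by positivity)
      exact inv_anti₀ (by positivity) (denom_norm_ge μ δ hδ (2 * π * w))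
  have hcont_f : Continuous (myf μ δ) := by
    apply Complex.continuous_ofReal.comp
    exact Real.continuous_exp.comp (by continuity)
  have hinv := (myf_integrable μ δ hδ).fourierInv_fourier_eq hFf_int (hcont_f.continuousAt (x := t))
  -- unfold the inverse Fourier integral
  rw [Real.fourierInv_eq_fourier_neg,
    Real.fourier_real_eq_integral_exp_smul] at hinv
  simp only [smul_eq_mul] at hinv
  have hinteq : ∀ v : ℝ, Complex.exp (↑(-2 * π * v * (-t)) * Complex.I) * 𝓕 (myf μ δ) v
      = (fun E : ℝ => Complex.exp (Complex.I * E * t) *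
          (2 * (μ:ℂ) / (((E : ℂ) + Complex.I * δ) ^ 2 + (μ : ℂ) ^ 2))) (2 * π * v) := by
    intro v
    rw [fourier_myf μ δ hδ v]
    congr 1
    congr 1
    push_cast
    ring
  rw [integral_congr_ae (Eventually.of_forall hinteq)] at hinv
  rw [MeasureTheory.Measure.integral_comp_mul_left (fun E : ℝ => Complex.exp (Complex.I * E * t) *
      (2 * (μ:ℂ) / (((E : ℂ) + Complex.I * δ) ^ 2 + (μ : ℂ) ^ 2))) (2 * π)] at hinv
  have h2π : (0:ℝ) < 2 * π := by positivity
  rw [abs_of_pos (inv_pos.mpr h2π)] at hinv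
  have hmuleq : (fun E : ℝ => Complex.exp (Complex.I * E * t) *
      (2 * (μ:ℂ) / (((E : ℂ) + Complex.I * δ) ^ 2 + (μ : ℂ) ^ 2)))
      = fun E : ℝ => (2 * (μ:ℂ)) *
        (Complex.exp (Complex.I * E * t) / (((E : ℂ) + Complex.I * δ) ^ 2 + (μ : ℂ) ^ 2)) := by
    funext E; ring
  rw [hmuleq, MeasureTheory.integral_const_mul] at hinv
  -- now hinv : (2π)⁻¹ • (2μ * ∫ g) = myf μ δ t
  rw [Complex.real_smul] at hinv
  have hπ : ((2 * π : ℝ))⁻¹ ≠ 0 := by positivity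
  have hgoal : (1 / (2 * (π:ℂ))) *
      ∫ E : ℝ, Complex.exp (Complex.I * E * t) / (((E : ℂ) + Complex.I * δ) ^ 2 + (μ : ℂ) ^ 2)
      = myf μ δ t / (2 * μ) := by
    have h2πC : (2 * (π:ℂ)) ≠ 0 := by
      simp [Real.pi_ne_zero]
    have hμC : (2 * (μ:ℂ)) ≠ 0 := by
      simp [show (μ:ℂ) ≠ 0 from Complex.ofReal_ne_zero.mpr (ne_of_gt hμ)]
    have hcast : (((2 * π : ℝ)⁻¹ : ℝ) : ℂ) = (2 * (π:ℂ))⁻¹ := by push_cast [mul_inv]; ring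
    rw [← hinv, hcast]
    rw [mul_div_assoc, mul_div_cancel_left₀ _ hμC, one_div]
  rw [hgoal, myf]
  push_cast
  ring
end

section
/- Let n ≥ 1, m > 0, and v ∈ ℝⁿ with ‖v‖ < 1. For every (E,k) ∈ ℝ × ℝⁿ one has the identity D̃(E,k) = ((E² + μ(k)² − δ(k)²) − 2iEδ(k)) / ((E² + (μ(k) − δ(k))²)(E² + (μ(k) + δ(k))²)), the denominator is strictly positive, and consequently the real part K̃(E,k) = (E² + μ(k)² − δ(k)²)/((E² + (μ(k) − δ(k))²)(E² + (μ(k) + δ(k))²)) is strictly positive. -/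
open Real
open scoped RealInnerProductSpace

noncomputable section

/-- One-particle energy `μ(k) = √(‖k‖² + m²)`. -/
def mu {n : ℕ} (m : ℝ) (k : EuclideanSpace ℝ (Fin n)) : ℝ := Real.sqrt (‖k‖ ^ 2 + m ^ 2)

/-- `δ(k) = ⟨k, v⟩`. -/
def del {n : ℕ} (v k : EuclideanSpace ℝ (Fin n)) : ℝ := ⟪k, v⟫

/-- Fourier symbol of the complex covariance: `D̃(E,k) = 1/((E + iδ(k))² + μ(k)²)`. -/
def Dtil {n : ℕ} (m : ℝ) (v : EuclideanSpace ℝ (Fin n)) (E : ℝ)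
    (k : EuclideanSpace ℝ (Fin n)) : ℂ :=
  1 / (((E : ℂ) + Complex.I * (del v k : ℝ)) ^ 2 + (mu m k : ℂ) ^ 2)

/-- The identity
`D̃(E,k) = ((E² + μ² − δ²) − 2iEδ) / ((E² + (μ−δ)²)(E² + (μ+δ)²))`, positivity of the
denominator, and strict positivity of the real part `K̃(E,k)`. -/
theorem stmt2 (n : ℕ) (hn : 1 ≤ n) (m : ℝ) (hm : 0 < m)
    (v : EuclideanSpace ℝ (Fin n)) (hv : ‖v‖ < 1)
    (E : ℝ) (k : EuclideanSpace ℝ (Fin n)) :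
    Dtil m v E k =
      (((E ^ 2 + mu m k ^ 2 - del v k ^ 2 : ℝ) : ℂ) - 2 * Complex.I * E * (del v k : ℝ)) /
        (((E ^ 2 + (mu m k - del v k) ^ 2) * (E ^ 2 + (mu m k + del v k) ^ 2) : ℝ) : ℂ) ∧
    0 < (E ^ 2 + (mu m k - del v k) ^ 2) * (E ^ 2 + (mu m k + del v k) ^ 2) ∧
    0 < (Dtil m v E k).re := by
  set u := mu m k with hu
  set d := del v k with hd
  have hkd : |d| ≤ ‖k‖ := by
    calc |d| ≤ ‖k‖ * ‖v‖ := abs_real_inner_le_norm k v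
    _ ≤ ‖k‖ * 1 := by
        apply mul_le_mul_of_nonneg_left (le_of_lt hv) (norm_nonneg k)
    _ = ‖k‖ := mul_one _
  have hku : ‖k‖ < u := by
    rw [hu, mu, Real.lt_sqrt (norm_nonneg k)]
    nlinarith
  have hdu : |d| < u := lt_of_le_of_lt hkd hku
  have hu0 : 0 < u := lt_of_le_of_lt (abs_nonneg d) hdu
  have hd2 : d ^ 2 < u ^ 2 := by
    have := sq_abs d
    nlinarith [abs_nonneg d]
  have hA : 0 < E ^ 2 + u ^ 2 - d ^ 2 := by nlinarith [sq_nonneg E]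
  have hden : 0 < (E ^ 2 + (u - d) ^ 2) * (E ^ 2 + (u + d) ^ 2) := by
    have h1 : 0 < u - d := by cases abs_lt.mp hdu; linarith
    have h2 : 0 < u + d := by cases abs_lt.mp hdu; linarith
    positivity
  have hZ : ((E : ℂ) + Complex.I * (d : ℝ)) ^ 2 + (u : ℂ) ^ 2
      = ((E ^ 2 + u ^ 2 - d ^ 2 : ℝ) : ℂ) + ((2 * E * d : ℝ) : ℂ) * Complex.I := by
    apply Complex.ext <;>
      simp [pow_two, Complex.mul_re, Complex.mul_im] <;> ring
  have hZne : ((E : ℂ) + Complex.I * (d : ℝ)) ^ 2 + (u : ℂ) ^ 2 ≠ 0 := by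
    rw [hZ]
    intro h
    have h2 := congrArg Complex.re h
    simp [pow_two, Complex.mul_re] at h2
    nlinarith
  have hdenC : (((E ^ 2 + (u - d) ^ 2) * (E ^ 2 + (u + d) ^ 2) : ℝ) : ℂ) ≠ 0 := by
    exact_mod_cast ne_of_gt hden
  have hId : Dtil m v E k =
      (((E ^ 2 + u ^ 2 - d ^ 2 : ℝ) : ℂ) - 2 * Complex.I * E * (d : ℝ)) /
        (((E ^ 2 + (u - d) ^ 2) * (E ^ 2 + (u + d) ^ 2) : ℝ) : ℂ) := by
    rw [Dtil]
    rw [div_eq_div_iff hZne hdenC]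
    apply Complex.ext <;>
      simp [pow_two, Complex.mul_re, Complex.mul_im] <;> ring
  refine ⟨hId, hden, ?_⟩
  rw [hId]
  rw [Complex.div_ofReal_re]
  have : ((((E ^ 2 + u ^ 2 - d ^ 2 : ℝ) : ℂ) - 2 * Complex.I * E * (d : ℝ))).re
      = E ^ 2 + u ^ 2 - d ^ 2 := by
    simp [pow_two, Complex.mul_re]
  rw [this]
  positivity

end
end

section
/- Let n ≥ 1, m > 0, and v ∈ ℝⁿ with ‖v‖ < 1. For every (E,k) ∈ ℝ × ℝⁿ, K̃(E,k) ≤ |D̃(E,k)| ≤ (1 − ‖v‖²)^{−1/2} · K̃(E,k). -/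
open Real
open scoped RealInnerProductSpace

noncomputable section

/-- Real part `K̃(E,k) = Re D̃(E,k)`. -/
def Ktil {n : ℕ} (m : ℝ) (v : EuclideanSpace ℝ (Fin n)) (E : ℝ)
    (k : EuclideanSpace ℝ (Fin n)) : ℝ := (Dtil m v E k).re

set_option maxHeartbeats 1000000 in
/-- `K̃(E,k) ≤ |D̃(E,k)| ≤ (1 − ‖v‖²)^{−1/2} · K̃(E,k)`. -/
theorem stmt3 (n : ℕ) (hn : 1 ≤ n) (m : ℝ) (hm : 0 < m)
    (v : EuclideanSpace ℝ (Fin n)) (hv : ‖v‖ < 1)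
    (E : ℝ) (k : EuclideanSpace ℝ (Fin n)) :
    Ktil m v E k ≤ ‖Dtil m v E k‖ ∧
    ‖Dtil m v E k‖ ≤ (1 - ‖v‖ ^ 2) ^ (-(1 / 2 : ℝ)) * Ktil m v E k := by
  set s : ℝ := ‖v‖ with hs
  have hs0 : 0 ≤ s := norm_nonneg v
  set μ : ℝ := mu m k with hμ
  set δ : ℝ := del v k with hδ
  have hmu2 : μ ^ 2 = ‖k‖ ^ 2 + m ^ 2 := Real.sq_sqrt (by positivity)
  have hdel2 : δ ^ 2 ≤ s ^ 2 * ‖k‖ ^ 2 := by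
    have h := abs_real_inner_le_norm k v
    have h2 : δ ^ 2 ≤ (‖k‖ * ‖v‖) ^ 2 := by
      rw [← sq_abs δ]
      exact pow_le_pow_left₀ (abs_nonneg _) h 2
    nlinarith
  have hdel2' : δ ^ 2 ≤ s ^ 2 * μ ^ 2 := by nlinarith [sq_nonneg s, sq_nonneg m]
  set w : ℂ := ((E : ℂ) + Complex.I * (δ : ℝ)) ^ 2 + (μ : ℂ) ^ 2 with hw
  have hwre : w.re = E ^ 2 + μ ^ 2 - δ ^ 2 := by
    simp [hw, pow_two, Complex.add_re, Complex.mul_re, Complex.mul_im]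
    ring
  have hwim : w.im = 2 * E * δ := by
    simp [hw, pow_two, Complex.add_im, Complex.mul_re, Complex.mul_im]
    ring
  have hrepos : 0 < w.re := by
    rw [hwre]
    nlinarith [mul_pos (show (0:ℝ) < 1 - s ^ 2 by nlinarith) (pow_pos hm 2), sq_nonneg E,
      mul_nonneg (show (0:ℝ) ≤ 1 - s ^ 2 by nlinarith) (sq_nonneg ‖k‖)]
  have hw0 : w ≠ 0 := by
    intro h
    rw [h] at hrepos
    simp at hrepos
  have hD : Dtil m v E k = w⁻¹ := by rw [Dtil, one_div]
  have hKt : Ktil m v E k = w.re / Complex.normSq w := by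
    rw [Ktil, hD, Complex.inv_re]
  have hAbs : ‖Dtil m v E k‖ = ‖w‖⁻¹ := by
    rw [hD, norm_inv]
  have hA : 0 < ‖w‖ := by
    simpa using (norm_pos_iff.mpr hw0)
  have hnsq : Complex.normSq w = ‖w‖ ^ 2 := (Complex.sq_norm w).symm
  clear_value w
  clear hw
  set t : ℝ := 1 - s ^ 2 with ht
  have ht0 : 0 < t := by nlinarith
  have hst : 0 < Real.sqrt t := Real.sqrt_pos.mpr ht0
  -- key algebraic inequality
  have hkey2 : t * ‖w‖ ^ 2 ≤ w.re ^ 2 := by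
    rw [Complex.sq_norm, Complex.normSq_apply, hwre, hwim]
    clear_value s μ δ
    have h1 : t * (2 * E * δ) ^ 2 ≤ s ^ 2 * (E ^ 2 + μ ^ 2 - δ ^ 2) ^ 2 := by
      have e1 : t * (2 * E * δ) ^ 2 ≤ t * (4 * E ^ 2) * (s ^ 2 * μ ^ 2) := by
        nlinarith [sq_nonneg E, mul_nonneg (le_of_lt ht0) (sq_nonneg E)]
      have e2 : t * (4 * E ^ 2) * (s ^ 2 * μ ^ 2) ≤ s ^ 2 * (E ^ 2 + t * μ ^ 2) ^ 2 := by
        nlinarith [sq_nonneg (E ^ 2 - t * μ ^ 2), sq_nonneg s]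
      have e3 : s ^ 2 * (E ^ 2 + t * μ ^ 2) ^ 2 ≤ s ^ 2 * (E ^ 2 + μ ^ 2 - δ ^ 2) ^ 2 := by
        have hle : E ^ 2 + t * μ ^ 2 ≤ E ^ 2 + μ ^ 2 - δ ^ 2 := by nlinarith
        have hpos : 0 ≤ E ^ 2 + t * μ ^ 2 := by positivity
        exact mul_le_mul_of_nonneg_left (pow_le_pow_left₀ hpos hle 2) (sq_nonneg s)
      linarith
    nlinarith [sq_nonneg s]
  have hkey : Real.sqrt t * ‖w‖ ≤ w.re := by
    have : Real.sqrt t * ‖w‖ = Real.sqrt (t * ‖w‖ ^ 2) := by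
      rw [Real.sqrt_mul (le_of_lt ht0), Real.sqrt_sq (le_of_lt hA)]
    rw [this]
    calc Real.sqrt (t * ‖w‖ ^ 2) ≤ Real.sqrt (w.re ^ 2) :=
          Real.sqrt_le_sqrt hkey2
      _ = w.re := Real.sqrt_sq (le_of_lt hrepos)
  have hrpow : (t : ℝ) ^ (-(1 / 2 : ℝ)) = (Real.sqrt t)⁻¹ := by
    rw [Real.rpow_neg (le_of_lt ht0), Real.sqrt_eq_rpow]
  constructor
  · calc Ktil m v E k = (Dtil m v E k).re := rfl
      _ ≤ ‖Dtil m v E k‖ := Complex.re_le_norm _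
  · rw [hAbs, hKt, hrpow, hnsq]
    have hrw : (Real.sqrt t)⁻¹ * (w.re / ‖w‖ ^ 2)
        = w.re / (Real.sqrt t * ‖w‖ ^ 2) := by
      field_simp
    rw [hrw, inv_eq_one_div, div_le_div_iff₀ hA (by positivity)]
    nlinarith [mul_le_mul_of_nonneg_right hkey (le_of_lt hA), sq_nonneg ‖w‖]

end
end

section
/- Let n ≥ 1, m > 0, and v ∈ ℝⁿ with ‖v‖ < 1. Then the range of the function k ↦ √(‖k‖² + m²) + ⟨k, v⟩ on ℝⁿ equals the closed half-line [m√(1 − ‖v‖²), ∞); in particular its infimum m√(1 − ‖v‖²) is attained. -/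
open Real
open scoped RealInnerProductSpace

/-- The range of `k ↦ √(‖k‖² + m²) + ⟨k,v⟩` on `ℝⁿ` equals the closed
half-line `[m√(1 − ‖v‖²), ∞)`; in particular the infimum `m√(1 − ‖v‖²)` is attained. -/
theorem stmt11 (n : ℕ) (hn : 1 ≤ n) (m : ℝ) (hm : 0 < m)
    (v : EuclideanSpace ℝ (Fin n)) (hv : ‖v‖ < 1) :
    Set.range (fun k : EuclideanSpace ℝ (Fin n) => Real.sqrt (‖k‖ ^ 2 + m ^ 2) + ⟪k, v⟫)
      = Set.Ici (m * Real.sqrt (1 - ‖v‖ ^ 2)) := by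
  set s := ‖v‖ with hs
  have hs0 : 0 ≤ s := norm_nonneg v
  set c : ℝ := 1 - s ^ 2 with hcdef
  have hc : 0 < c := by nlinarith
  set sc := Real.sqrt c with hscdef
  have hsc2 : sc ^ 2 = c := Real.sq_sqrt hc.le
  have hsc0 : 0 ≤ sc := Real.sqrt_nonneg c
  ext t
  constructor
  · rintro ⟨k, rfl⟩
    simp only [Set.mem_Ici]
    have hp : -(‖k‖ * s) ≤ ⟪k, v⟫ := by
      have := abs_real_inner_le_norm k v
      have := neg_abs_le (⟪k, v⟫ : ℝ)
      linarith
    set x := ‖k‖ with hx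
    have hx0 : 0 ≤ x := norm_nonneg k
    have h1 : (m * sc + x * s) ^ 2 ≤ x ^ 2 + m ^ 2 := by
      nlinarith [sq_nonneg (x * sc - m * s)]
    have h2 : m * sc + x * s ≤ Real.sqrt (x ^ 2 + m ^ 2) := by
      have h3 : m * sc + x * s = Real.sqrt ((m * sc + x * s) ^ 2) :=
        (Real.sqrt_sq (by positivity)).symm
      rw [h3]
      exact Real.sqrt_le_sqrt h1
    linarith
  · intro ht
    simp only [Set.mem_Ici] at ht
    have hM0 : 0 ≤ m * sc := by positivity
    have ht0 : 0 ≤ t := le_trans hM0 ht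
    -- unit vector u with ⟪u, v⟫ = -s
    obtain ⟨u, hu1, huv⟩ : ∃ u : EuclideanSpace ℝ (Fin n), ‖u‖ = 1 ∧ ⟪u, v⟫ = -s := by
      by_cases hv0 : v = 0
      · refine ⟨EuclideanSpace.single ⟨0, hn⟩ 1, ?_, ?_⟩
        · simp [EuclideanSpace.norm_single]
        · simp [hv0, hs]
      · refine ⟨(-s⁻¹) • v, ?_, ?_⟩
        · have hsne : s ≠ 0 := by simpa [hs] using hv0
          rw [norm_smul, norm_neg, norm_inv, Real.norm_eq_abs, abs_of_nonneg hs0, ← hs,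
            inv_mul_cancel₀ hsne]
        · rw [real_inner_smul_left, real_inner_self_eq_norm_sq]
          have hsne : s ≠ 0 := by simpa [hs] using hv0
          field_simp [← hs]
          ring
    set d := Real.sqrt (t ^ 2 - m ^ 2 * c) with hddef
    have hd0 : 0 ≤ d := Real.sqrt_nonneg _
    have hd2 : d ^ 2 = t ^ 2 - m ^ 2 * c := by
      apply Real.sq_sqrt
      nlinarith [ht, hM0, hsc2]
    set r : ℝ := (t * s + d) / c with hrdef
    have hr0 : 0 ≤ r := by positivity
    have hts : 0 ≤ t + r * s := by positivity
    have key : (t + r * s) ^ 2 = r ^ 2 + m ^ 2 := by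
      rw [hrdef]
      field_simp
      linear_combination (-(1 - s ^ 2)) * hd2
    refine ⟨r • u, ?_⟩
    have hnorm : ‖r • u‖ ^ 2 = r ^ 2 := by
      rw [norm_smul, hu1, mul_one, Real.norm_eq_abs, sq_abs]
    have hinner : ⟪r • u, v⟫ = -(r * s) := by
      rw [real_inner_smul_left, huv]; ring
    simp only [hnorm, hinner]
    rw [← key, Real.sqrt_sq hts]
    ring
end

section
/- Let H be a complex Hilbert space and let A, B, C be bounded linear operators on H such that A, B, and C are self-adjoint and C commutes with both A and B. Then ‖C · exp(A + B)‖ ≤ ‖exp A‖ · ‖C · exp B‖, where exp denotes the operator exponential and ‖·‖ the operator norm. -/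
open NormedSpace

section aux

variable {H : Type*} [NormedAddCommGroup H] [InnerProductSpace ℂ H] [CompleteSpace H]

/-- An operator commuting with a selfadjoint operator commutes with any real continuous
function of it. -/
lemma stmt12_commute_cfc {a b : H →L[ℂ] H} (ha : IsSelfAdjoint a) (hab : Commute b a)
    (f : ℝ → ℝ) : Commute b (cfc f a) := by
  by_cases hf : ContinuousOn f (spectrum ℝ a)
  · have hcs : CompactSpace (spectrum ℝ a) :=
      isCompact_iff_compactSpace.mp (ContinuousFunctionalCalculus.isCompact_spectrum (R := ℝ) a)
    have hφcont : Continuous (cfcHom (R := ℝ) ha) :=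
      (cfcHom_isClosedEmbedding (R := ℝ) ha).continuous
    have hS : IsClosed {g : C(spectrum ℝ a, ℝ) | Commute b (cfcHom (R := ℝ) ha g)} := by
      have h1 : Continuous fun g : C(spectrum ℝ a, ℝ) => b * (cfcHom (R := ℝ) ha g) :=
        (continuous_mul_left b).comp hφcont
      have h2 : Continuous fun g : C(spectrum ℝ a, ℝ) => (cfcHom (R := ℝ) ha g) * b :=
        (continuous_mul_right b).comp hφcont
      exact isClosed_eq h1 h2
    have hpoly : (polynomialFunctions (spectrum ℝ a) : Set C(spectrum ℝ a, ℝ)) ⊆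
        {g : C(spectrum ℝ a, ℝ) | Commute b (cfcHom (R := ℝ) ha g)} := by
      intro g hg
      rw [SetLike.mem_coe, polynomialFunctions.eq_adjoin_X] at hg
      induction hg using Algebra.adjoin_induction with
      | mem x hx =>
        rw [Set.mem_singleton_iff] at hx
        subst hx
        have : (Polynomial.toContinuousMapOnAlgHom (spectrum ℝ a) Polynomial.X) =
            ((ContinuousMap.id ℝ).restrict <| spectrum ℝ a) := by
          ext x; simp
        simpa only [Set.mem_setOf_eq, this, cfcHom_id ha] using hab
      | algebraMap r =>
        simp only [Set.mem_setOf_eq, AlgHomClass.commutes]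
        exact (Algebra.commutes r b).symm
      | add x y hx hy hpx hpy =>
        simp only [Set.mem_setOf_eq, map_add]
        exact hpx.add_right hpy
      | mul x y hx hy hpx hpy =>
        simp only [Set.mem_setOf_eq, map_mul]
        exact hpx.mul_right hpy
    rw [cfc_apply f a ha hf]
    have hmem : (⟨_, hf.restrict⟩ : C(spectrum ℝ a, ℝ)) ∈
        closure (polynomialFunctions (spectrum ℝ a) : Set C(spectrum ℝ a, ℝ)) := by
      rw [← Subalgebra.topologicalClosure_coe, polynomialFunctions.topologicalClosure]
      trivial
    exact closure_minimal hpoly hS hmem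
  · rw [cfc_apply_of_not_continuousOn a hf]
    exact Commute.zero_right b

/-- Lower bound: `exp` of any spectral point bounds `‖exp X‖` from below. -/
lemma stmt12_exp_le_norm_exp {X : H →L[ℂ] H} (hX : IsSelfAdjoint X)
    {x : ℝ} (hx : x ∈ spectrum ℝ X) :
    Real.exp x ≤ ‖NormedSpace.exp X‖ := by
  rw [← CFC.real_exp_eq_normedSpace_exp hX]
  calc Real.exp x = ‖Real.exp x‖ := (Real.norm_of_nonneg (Real.exp_pos x).le).symm
  _ ≤ ‖cfc Real.exp X‖ := norm_apply_le_norm_cfc Real.exp X hx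

/-- Upper bound on `‖exp X‖` from an upper bound on the spectrum. -/
lemma stmt12_norm_exp_le {X : H →L[ℂ] H} (hX : IsSelfAdjoint X) {r : ℝ}
    (hr : ∀ x ∈ spectrum ℝ X, x ≤ r) :
    ‖NormedSpace.exp X‖ ≤ Real.exp r := by
  rw [← CFC.real_exp_eq_normedSpace_exp hX]
  refine norm_cfc_le (Real.exp_pos r).le fun x hx => ?_
  rw [Real.norm_of_nonneg (Real.exp_pos x).le]
  exact Real.exp_le_exp.mpr (hr x hx)

/-- `‖exp (S + T)‖ ≤ ‖exp S‖ * ‖exp T‖` for selfadjoint `S`, `T`. -/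
lemma stmt12_norm_exp_add_le (S T : H →L[ℂ] H) (hS : IsSelfAdjoint S) (hT : IsSelfAdjoint T) :
    ‖NormedSpace.exp (S + T)‖ ≤ ‖NormedSpace.exp S‖ * ‖NormedSpace.exp T‖ := by
  obtain h | h := subsingleton_or_nontrivial (H →L[ℂ] H)
  · rw [Subsingleton.elim (NormedSpace.exp (S + T)) 0, norm_zero]
    positivity
  have hcS : IsCompact (spectrum ℝ S) := ContinuousFunctionalCalculus.isCompact_spectrum S
  have hcT : IsCompact (spectrum ℝ T) := ContinuousFunctionalCalculus.isCompact_spectrum T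
  have hnS : (spectrum ℝ S).Nonempty := ContinuousFunctionalCalculus.spectrum_nonempty S hS
  have hnT : (spectrum ℝ T).Nonempty := ContinuousFunctionalCalculus.spectrum_nonempty T hT
  set mS := sSup (spectrum ℝ S)
  set mT := sSup (spectrum ℝ T)
  have hSle : S ≤ algebraMap ℝ (H →L[ℂ] H) mS :=
    (le_algebraMap_iff_spectrum_le hS).mpr fun x hx => le_csSup hcS.bddAbove hx
  have hTle : T ≤ algebraMap ℝ (H →L[ℂ] H) mT :=
    (le_algebraMap_iff_spectrum_le hT).mpr fun x hx => le_csSup hcT.bddAbove hx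
  have hsum : S + T ≤ algebraMap ℝ (H →L[ℂ] H) (mS + mT) := by
    rw [map_add]; exact add_le_add hSle hTle
  have hspec : ∀ x ∈ spectrum ℝ (S + T), x ≤ mS + mT :=
    (le_algebraMap_iff_spectrum_le (hS.add hT)).mp hsum
  calc ‖NormedSpace.exp (S + T)‖ ≤ Real.exp (mS + mT) :=
        stmt12_norm_exp_le (hS.add hT) hspec
  _ = Real.exp mS * Real.exp mT := Real.exp_add mS mT
  _ ≤ ‖NormedSpace.exp S‖ * ‖NormedSpace.exp T‖ :=
      mul_le_mul (stmt12_exp_le_norm_exp hS (hcS.sSup_mem hnS))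
        (stmt12_exp_le_norm_exp hT (hcT.sSup_mem hnT)) (Real.exp_pos mT).le (norm_nonneg _)

/-- The key inequality, for a nonnegative operator `P`. -/
lemma stmt12_key (S T P : H →L[ℂ] H) (hS : IsSelfAdjoint S) (hT : IsSelfAdjoint T)
    (hP : 0 ≤ P) (hPS : Commute P S) (hPT : Commute P T) :
    ‖P * NormedSpace.exp (S + T)‖ ≤ ‖NormedSpace.exp S‖ * ‖P * NormedSpace.exp T‖ := by
  have hPsa : IsSelfAdjoint P := .of_nonneg hP
  have main : ∀ ε : ℝ, 0 < ε → ‖P * NormedSpace.exp (S + T)‖ ≤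
      ε * ‖NormedSpace.exp (S + T)‖ +
      ‖NormedSpace.exp S‖ * (‖P * NormedSpace.exp T‖ + ε * ‖NormedSpace.exp T‖) := by
    intro ε hε
    let +nondep : NormedAlgebra ℚ (H →L[ℂ] H) := .restrictScalars ℚ ℂ _
    set P' := P + algebraMap ℝ (H →L[ℂ] H) ε with hP'def
    have halgsa : IsSelfAdjoint (algebraMap ℝ (H →L[ℂ] H) ε) := (IsSelfAdjoint.all ε).algebraMap _
    have hP'sa : IsSelfAdjoint P' := hPsa.add halgsa
    have hP'spec : ∀ x ∈ spectrum ℝ P', 0 < x := by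
      have hle : algebraMap ℝ (H →L[ℂ] H) ε ≤ P' := by
        rw [hP'def]; exact le_add_of_nonneg_left hP
      intro x hx
      exact lt_of_lt_of_le hε ((algebraMap_le_iff_le_spectrum hP'sa).mp hle x hx)
    set D := CFC.log P' with hDdef
    have hDsa : IsSelfAdjoint D := IsSelfAdjoint.log
    have hexpD : NormedSpace.exp D = P' := CFC.exp_log P' ((StarOrderedRing.isStrictlyPositive_iff_spectrum_pos (R := ℝ) P' hP'sa).mpr hP'spec)
    have hSP' : Commute S P' := ((hPS.symm).add_right ((Algebra.commutes ε S).symm))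
    have hTP' : Commute T P' := ((hPT.symm).add_right ((Algebra.commutes ε T).symm))
    have hDS : Commute S D := stmt12_commute_cfc hP'sa hSP' Real.log
    have hDT : Commute T D := stmt12_commute_cfc hP'sa hTP' Real.log
    have h1 : P' * NormedSpace.exp (S + T) = NormedSpace.exp (S + (D + T)) := by
      have : D + (S + T) = S + (D + T) := by abel
      rw [← this, exp_add_of_commute ((hDS.symm).add_right hDT.symm), hexpD]
    have h2 : P' * NormedSpace.exp T = NormedSpace.exp (D + T) := by
      rw [exp_add_of_commute hDT.symm, hexpD]
    have h3 : ‖P' * NormedSpace.exp (S + T)‖ ≤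
        ‖NormedSpace.exp S‖ * ‖P' * NormedSpace.exp T‖ := by
      rw [h1, h2]
      exact stmt12_norm_exp_add_le S (D + T) hS (hDsa.add hT)
    have halg : ∀ X : H →L[ℂ] H, algebraMap ℝ (H →L[ℂ] H) ε * X = ε • X := by
      intro X
      rw [Algebra.algebraMap_eq_smul_one, smul_mul_assoc, one_mul]
    have h4 : ‖P * NormedSpace.exp (S + T)‖ ≤
        ‖P' * NormedSpace.exp (S + T)‖ + ε * ‖NormedSpace.exp (S + T)‖ := by
      have : P * NormedSpace.exp (S + T) =
          P' * NormedSpace.exp (S + T) - ε • NormedSpace.exp (S + T) := by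
        rw [hP'def, add_mul, halg]; abel
      rw [this]
      calc _ ≤ ‖P' * NormedSpace.exp (S + T)‖ + ‖ε • NormedSpace.exp (S + T)‖ :=
            norm_sub_le _ _
      _ = _ := by rw [norm_smul, Real.norm_of_nonneg hε.le]
    have h5 : ‖P' * NormedSpace.exp T‖ ≤ ‖P * NormedSpace.exp T‖ + ε * ‖NormedSpace.exp T‖ := by
      have : P' * NormedSpace.exp T = P * NormedSpace.exp T + ε • NormedSpace.exp T := by
        rw [hP'def, add_mul, halg]
      rw [this]
      calc _ ≤ ‖P * NormedSpace.exp T‖ + ‖ε • NormedSpace.exp T‖ := norm_add_le _ _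
      _ = _ := by rw [norm_smul, Real.norm_of_nonneg hε.le]
    calc ‖P * NormedSpace.exp (S + T)‖
        ≤ ‖P' * NormedSpace.exp (S + T)‖ + ε * ‖NormedSpace.exp (S + T)‖ := h4
    _ ≤ ‖NormedSpace.exp S‖ * ‖P' * NormedSpace.exp T‖ + ε * ‖NormedSpace.exp (S + T)‖ := by
        gcongr
    _ ≤ ‖NormedSpace.exp S‖ * (‖P * NormedSpace.exp T‖ + ε * ‖NormedSpace.exp T‖) +
          ε * ‖NormedSpace.exp (S + T)‖ := by
        have := mul_le_mul_of_nonneg_left h5 (norm_nonneg (NormedSpace.exp S))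
        linarith
    _ = _ := by ring
  -- take the limit ε → 0⁺
  have hlim : Filter.Tendsto (fun ε : ℝ => ε * ‖NormedSpace.exp (S + T)‖ +
      ‖NormedSpace.exp S‖ * (‖P * NormedSpace.exp T‖ + ε * ‖NormedSpace.exp T‖))
      (nhdsWithin 0 (Set.Ioi 0)) (nhds (‖NormedSpace.exp S‖ * ‖P * NormedSpace.exp T‖)) := by
    have : Continuous (fun ε : ℝ => ε * ‖NormedSpace.exp (S + T)‖ +
        ‖NormedSpace.exp S‖ * (‖P * NormedSpace.exp T‖ + ε * ‖NormedSpace.exp T‖)) :=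
      ((continuous_id.mul continuous_const).add (continuous_const.mul
        (continuous_const.add (continuous_id.mul continuous_const))))
    have h0 := (this.tendsto 0).mono_left (nhdsWithin_le_nhds (s := Set.Ioi (0:ℝ)))
    simpa using h0
  refine ge_of_tendsto hlim ?_
  filter_upwards [self_mem_nhdsWithin] with ε hε
  exact main ε hε

end aux

/-- For bounded self-adjoint operators `A, B, C` on a complex Hilbert
space with `C` commuting with `A` and `B`:
`‖C·exp(A+B)‖ ≤ ‖exp A‖ · ‖C·exp B‖`. -/
theorem stmt12 {H : Type*} [NormedAddCommGroup H] [InnerProductSpace ℂ H] [CompleteSpace H]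
    (A B C : H →L[ℂ] H)
    (hA : IsSelfAdjoint A) (hB : IsSelfAdjoint B) (hC : IsSelfAdjoint C)
    (hCA : Commute C A) (hCB : Commute C B) :
    ‖C * NormedSpace.exp (A + B)‖ ≤ ‖NormedSpace.exp A‖ * ‖C * NormedSpace.exp B‖ := by
  let +nondep : NormedAlgebra ℚ (H →L[ℂ] H) := .restrictScalars ℚ ℂ _
  have hAB : IsSelfAdjoint (A + B) := hA.add hB
  have hCexpAB : Commute C (NormedSpace.exp (A + B)) := ((hCA.add_right hCB).exp_right)
  have hCexpB : Commute C (NormedSpace.exp B) := hCB.exp_right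
  have hexpABsa : IsSelfAdjoint (NormedSpace.exp (A + B)) := by
    rw [IsSelfAdjoint, star_exp, hAB.star_eq]
  have hexpBsa : IsSelfAdjoint (NormedSpace.exp B) := by
    rw [IsSelfAdjoint, star_exp, hB.star_eq]
  have hexpAsa : IsSelfAdjoint (NormedSpace.exp A) := by
    rw [IsSelfAdjoint, star_exp, hA.star_eq]
  have hXsa : IsSelfAdjoint (C * NormedSpace.exp (A + B)) := by
    rw [IsSelfAdjoint, star_mul, hexpABsa.star_eq, hC.star_eq]
    exact hCexpAB.eq.symm
  have hYsa : IsSelfAdjoint (C * NormedSpace.exp B) := by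
    rw [IsSelfAdjoint, star_mul, hexpBsa.star_eq, hC.star_eq]
    exact hCexpB.eq.symm
  have hCC : (0 : H →L[ℂ] H) ≤ C * C := by
    have := star_mul_self_nonneg C
    rwa [hC.star_eq] at this
  -- squares
  have he2 : NormedSpace.exp (A + B) * NormedSpace.exp (A + B) =
      NormedSpace.exp ((A + A) + (B + B)) := by
    rw [← exp_add_of_commute (Commute.refl (A + B))]
    congr 1
    abel
  have he2B : NormedSpace.exp B * NormedSpace.exp B = NormedSpace.exp (B + B) :=
    (exp_add_of_commute (Commute.refl B)).symm
  have heA2 : NormedSpace.exp (A + A) = NormedSpace.exp A * NormedSpace.exp A :=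
    exp_add_of_commute (Commute.refl A)
  have hsq : ∀ D E : H →L[ℂ] H, Commute D E →
      (D * E) * (D * E) = (D * D) * (E * E) := by
    intro D E hDE
    rw [mul_assoc D E (D * E), ← mul_assoc E D E, ← hDE.eq, mul_assoc D E E,
      ← mul_assoc D D (E * E)]
  have hXX : (C * NormedSpace.exp (A + B)) * (C * NormedSpace.exp (A + B)) =
      (C * C) * NormedSpace.exp ((A + A) + (B + B)) := by
    rw [hsq C _ hCexpAB, he2]
  have hYY : (C * NormedSpace.exp B) * (C * NormedSpace.exp B) =
      (C * C) * NormedSpace.exp (B + B) := by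
    rw [hsq C _ hCexpB, he2B]
  have hnormsq : ∀ X : H →L[ℂ] H, IsSelfAdjoint X → ‖X * X‖ = ‖X‖ * ‖X‖ := by
    intro X hX
    have := CStarRing.norm_star_mul_self (x := X)
    rwa [hX.star_eq] at this
  have hkey := stmt12_key (A + A) (B + B) (C * C) (hA.add hA) (hB.add hB) hCC
    ((hCA.mul_left hCA).add_right (hCA.mul_left hCA))
    ((hCB.mul_left hCB).add_right (hCB.mul_left hCB))
  rw [← hXX, ← hYY, heA2, hnormsq _ hXsa, hnormsq _ hYsa, hnormsq _ hexpAsa] at hkey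
  nlinarith [norm_nonneg (C * NormedSpace.exp (A + B)), norm_nonneg (C * NormedSpace.exp B),
    norm_nonneg (NormedSpace.exp A),
    mul_nonneg (norm_nonneg (NormedSpace.exp A)) (norm_nonneg (C * NormedSpace.exp B))]
end

section
/- Let μ, δ, β be real numbers with β > 0 and |δ| < μ, let n ∈ ℤ, and set E = 2πn/β. Then ∫₀^β (1/(2μ)) · ( e^{−ξ(μ−δ)}/(1 − e^{−β(μ−δ)}) + e^{−(β−ξ)(μ+δ)}/(1 − e^{−β(μ+δ)}) ) · e^{−iEξ} dξ = 1/((E + iδ)² + μ²). -/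
open Real MeasureTheory intervalIntegral

/-- Fourier coefficient of the β-periodized covariance at the Matsubara
frequency `E = 2πn/β`:
`∫₀^β (1/(2μ))(e^{−ξ(μ−δ)}/(1−e^{−β(μ−δ)}) + e^{−(β−ξ)(μ+δ)}/(1−e^{−β(μ+δ)})) e^{−iEξ} dξ
  = 1/((E + iδ)² + μ²)`. -/
theorem stmt15 (μ δ β : ℝ) (hβ : 0 < β) (hδ : |δ| < μ) (n : ℤ) (E : ℝ)
    (hE : E = 2 * π * n / β) :
    ∫ ξ in (0 : ℝ)..β,
        (((1 / (2 * μ)) *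
          (Real.exp (-ξ * (μ - δ)) / (1 - Real.exp (-β * (μ - δ))) +
            Real.exp (-(β - ξ) * (μ + δ)) / (1 - Real.exp (-β * (μ + δ)))) : ℝ) : ℂ) *
          Complex.exp (-Complex.I * E * ξ)
      = 1 / (((E : ℂ) + Complex.I * δ) ^ 2 + (μ : ℂ) ^ 2) := by
  obtain ⟨hδ1, hδ2⟩ := abs_lt.mp hδ
  have ha : (0:ℝ) < μ - δ := by linarith
  have hb : (0:ℝ) < μ + δ := by linarith
  have hμ : (0:ℝ) < μ := by linarith
  set a : ℝ := μ - δ with ha'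
  set b : ℝ := μ + δ with hb'
  -- nonvanishing of the real denominators
  have hA : Real.exp (-β * a) < 1 := Real.exp_lt_one_iff.mpr (by nlinarith)
  have hB : Real.exp (-β * b) < 1 := Real.exp_lt_one_iff.mpr (by nlinarith)
  have hA' : (1 : ℂ) - Real.exp (-β * a) ≠ 0 :=
    sub_ne_zero.mpr (fun h => absurd (Complex.ofReal_eq_one.mp h.symm) hA.ne)
  have hB' : (1 : ℂ) - Real.exp (-β * b) ≠ 0 :=
    sub_ne_zero.mpr (fun h => absurd (Complex.ofReal_eq_one.mp h.symm) hB.ne)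
  set z1 : ℂ := -(a : ℂ) - Complex.I * E with hz1'
  set z2 : ℂ := (b : ℂ) - Complex.I * E with hz2'
  have hz1 : z1 ≠ 0 := by
    intro h
    have h2 := congrArg Complex.re h
    simp [hz1', Complex.add_re, Complex.mul_re] at h2
    linarith
  have hz2 : z2 ≠ 0 := by
    intro h
    have h2 := congrArg Complex.re h
    simp [hz2', Complex.add_re, Complex.mul_re] at h2
    linarith
  -- the Matsubara periodicity
  have hβc : (β : ℂ) ≠ 0 := by exact_mod_cast hβ.ne'
  have hEβ : (E : ℂ) * β = 2 * π * n := by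
    rw [hE]; push_cast; field_simp
  have hper : Complex.exp (-Complex.I * E * β) = 1 := by
    have h : -Complex.I * E * β = ((-n : ℤ) : ℂ) * (2 * π * Complex.I) := by
      push_cast
      linear_combination (-Complex.I) * hEβ
    rw [h, Complex.exp_int_mul_two_pi_mul_I]
  set c1 : ℂ := (1 / (2 * μ) : ℂ) / (1 - Real.exp (-β * a)) with hc1'
  set c2 : ℂ := (1 / (2 * μ) : ℂ) * Real.exp (-β * b) / (1 - Real.exp (-β * b)) with hc2'
  have hfun : ∀ ξ : ℝ,
      (((1 / (2 * μ)) *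
          (Real.exp (-ξ * a) / (1 - Real.exp (-β * a)) +
            Real.exp (-(β - ξ) * b) / (1 - Real.exp (-β * b))) : ℝ) : ℂ) *
          Complex.exp (-Complex.I * E * ξ)
        = c1 * Complex.exp (z1 * ξ) + c2 * Complex.exp (z2 * ξ) := by
    intro ξ
    have e1 : Complex.exp (z1 * ξ)
        = Real.exp (-ξ * a) * Complex.exp (-Complex.I * E * ξ) := by
      rw [Complex.ofReal_exp, ← Complex.exp_add]
      congr 1
      push_cast [hz1']
      ring
    have e2 : Complex.exp (z2 * ξ)
        = Real.exp (ξ * b) * Complex.exp (-Complex.I * E * ξ) := by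
      rw [Complex.ofReal_exp, ← Complex.exp_add]
      congr 1
      push_cast [hz2']
      ring
    have e3 : (Real.exp (-(β - ξ) * b) : ℂ)
        = Real.exp (-β * b) * Real.exp (ξ * b) := by
      rw [← Complex.ofReal_mul, ← Real.exp_add]
      congr 2
      ring
    rw [e1, e2, hc1', hc2']
    push_cast [e3]
    ring
  rw [intervalIntegral.integral_congr (g := fun ξ =>
      c1 * Complex.exp (z1 * ξ) + c2 * Complex.exp (z2 * ξ)) (fun ξ _ => hfun ξ)]
  have hcont : ∀ z : ℂ, Continuous fun ξ : ℝ => Complex.exp (z * ξ) :=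
    fun z => Complex.continuous_exp.comp (continuous_const.mul Complex.continuous_ofReal)
  have hi1 : IntervalIntegrable (fun ξ : ℝ => c1 * Complex.exp (z1 * ξ))
      volume 0 β := (continuous_const.mul (hcont z1)).intervalIntegrable 0 β
  have hi2 : IntervalIntegrable (fun ξ : ℝ => c2 * Complex.exp (z2 * ξ))
      volume 0 β := (continuous_const.mul (hcont z2)).intervalIntegrable 0 β
  rw [intervalIntegral.integral_add hi1 hi2,
    intervalIntegral.integral_const_mul, intervalIntegral.integral_const_mul,
    integral_exp_mul_complex hz1, integral_exp_mul_complex hz2]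
  -- compute the endpoint exponentials
  have ez1 : Complex.exp (z1 * β) = Real.exp (-β * a) := by
    have h : z1 * β = (-Complex.I * E * β) + (-β * a : ℝ) := by
      push_cast [hz1']; ring
    rw [h, Complex.exp_add, hper, one_mul, Complex.ofReal_exp]
  have ez2 : Complex.exp (z2 * β) = ((Real.exp (-β * b) : ℂ))⁻¹ := by
    have h : z2 * β = (-Complex.I * E * β) + (β * b : ℝ) := by
      push_cast [hz2']; ring
    rw [h, Complex.exp_add, hper, one_mul, Complex.ofReal_exp,
      ← Complex.exp_neg]
    congr 1
    push_cast
    ring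
  have hexp : ((Real.exp (-β * b) : ℝ) : ℂ) ≠ 0 :=
    Complex.ofReal_ne_zero.mpr (Real.exp_ne_zero _)
  have hμc : (μ : ℂ) ≠ 0 := by exact_mod_cast hμ.ne'
  have hz1z2 : ((E : ℂ) + Complex.I * δ) ^ 2 + (μ : ℂ) ^ 2 = -(z1 * z2) := by
    rw [hz1', hz2', ha', hb']
    have h2 : Complex.I ^ 2 = -1 := Complex.I_sq
    push_cast
    linear_combination ((E:ℂ)^2 + (δ:ℂ)^2) * h2
  have hzz : z2 = z1 + 2 * (μ:ℂ) := by
    rw [hz1', hz2', ha', hb']; push_cast; ring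
  rw [ez1, ez2, hc1', hc2', hz1z2]
  rw [hzz] at hz2 ⊢
  generalize hGA : ((Real.exp (-β * a) : ℝ) : ℂ) = A at hA' ⊢
  generalize hGB : ((Real.exp (-β * b) : ℝ) : ℂ) = B at hB' hexp ⊢
  clear_value z1 z2
  simp only [Complex.ofReal_zero, mul_zero, Complex.exp_zero]
  have t1 : (1 / (2 * (μ:ℂ)) / (1 - A)) * ((A - 1) / z1) = -(1 / (2 * ↑μ * z1)) := by
    field_simp [hμc, hA', hz1]
    ring
  have t2 : (1 / (2 * (μ:ℂ)) * B / (1 - B)) * ((B⁻¹ - 1) / (z1 + 2 * ↑μ))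
      = 1 / (2 * ↑μ * (z1 + 2 * ↑μ)) := by
    field_simp [hμc, hB', hexp, hz2]
  rw [t1, t2]
  rw [neg_add_eq_sub, div_sub_div _ _ (by simp [hμc, hz2]) (by simp [hμc, hz1]),
    div_eq_div_iff (by simp [hμc, hz1, hz2]) (by simp [hz1, hz2])]
  ring
end

section
/- Single-mode reflection positivity of the periodized covariance: let a > 0, a' > 0, β > 0, and let f : [0, β/2] → ℂ be continuous. Then the double integral ∫₀^{β/2} ∫₀^{β/2} conj(f(t)) · ( e^{−(t+t')a}/(1 − e^{−βa}) + e^{(t+t'−β)a'}/(1 − e^{−βa'}) ) · f(t') dt dt' is real and nonnegative; indeed it equals (1 + ρ_a)·|∫₀^{β/2} e^{−ta} f(t) dt|² + ρ_{a'}·|∫₀^{β/2} e^{ta'} f(t) dt|², where ρ_c = e^{−βc}/(1 − e^{−βc}). -/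
open Real MeasureTheory
open scoped ComplexConjugate

/-- Single-mode reflection positivity of the periodized covariance: for
`a, a' > 0`, `β > 0` and `f` continuous on `[0, β/2]`, the double integral
`∫₀^{β/2}∫₀^{β/2} conj(f(t))·(e^{−(t+t')a}/(1−e^{−βa}) + e^{(t+t'−β)a'}/(1−e^{−βa'}))·f(t') dt dt'`
is real and nonnegative: it equals `(1+ρ_a)|∫₀^{β/2} e^{−ta}f(t)dt|² + ρ_{a'}|∫₀^{β/2} e^{ta'}f(t)dt|²`
with `ρ_c = e^{−βc}/(1 − e^{−βc})`. -/
theorem stmt17 (a a' β : ℝ) (ha : 0 < a) (ha' : 0 < a') (hβ : 0 < β)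
    (f : ℝ → ℂ) (hf : ContinuousOn f (Set.Icc 0 (β / 2))) :
    (∫ t in (0 : ℝ)..(β / 2), ∫ t' in (0 : ℝ)..(β / 2),
        conj (f t) *
          (((Real.exp (-(t + t') * a) / (1 - Real.exp (-β * a)) +
            Real.exp ((t + t' - β) * a') / (1 - Real.exp (-β * a'))) : ℝ) : ℂ) * f t').im = 0 ∧
    0 ≤ (∫ t in (0 : ℝ)..(β / 2), ∫ t' in (0 : ℝ)..(β / 2),
        conj (f t) *
          (((Real.exp (-(t + t') * a) / (1 - Real.exp (-β * a)) +
            Real.exp ((t + t' - β) * a') / (1 - Real.exp (-β * a'))) : ℝ) : ℂ) * f t').re ∧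
    (∫ t in (0 : ℝ)..(β / 2), ∫ t' in (0 : ℝ)..(β / 2),
        conj (f t) *
          (((Real.exp (-(t + t') * a) / (1 - Real.exp (-β * a)) +
            Real.exp ((t + t' - β) * a') / (1 - Real.exp (-β * a'))) : ℝ) : ℂ) * f t')
      = (((1 + Real.exp (-β * a) / (1 - Real.exp (-β * a))) *
            ‖∫ t in (0 : ℝ)..(β / 2), Complex.exp (-(t * a) : ℝ) * f t‖ ^ 2 +
          (Real.exp (-β * a') / (1 - Real.exp (-β * a'))) *
            ‖∫ t in (0 : ℝ)..(β / 2), Complex.exp ((t * a' : ℝ)) * f t‖ ^ 2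
          : ℝ) : ℂ) := by
  have hb0 : (0:ℝ) ≤ β / 2 := by positivity
  have hd1 : 0 < 1 - Real.exp (-β * a) := by
    have : Real.exp (-β * a) < 1 := Real.exp_lt_one_iff.mpr (by nlinarith)
    linarith
  have hd2 : 0 < 1 - Real.exp (-β * a') := by
    have : Real.exp (-β * a') < 1 := Real.exp_lt_one_iff.mpr (by nlinarith)
    linarith
  set c₁ : ℝ := 1 / (1 - Real.exp (-β * a)) with hc₁
  set c₂ : ℝ := Real.exp (-β * a') / (1 - Real.exp (-β * a')) with hc₂
  set g₁ : ℝ → ℂ := fun t => ((Real.exp (-(t * a)) : ℝ) : ℂ) * f t with hg₁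
  set g₂ : ℝ → ℂ := fun t => ((Real.exp (t * a') : ℝ) : ℂ) * f t with hg₂
  -- integrability
  have huIcc : Set.uIcc (0:ℝ) (β/2) = Set.Icc 0 (β/2) := Set.uIcc_of_le hb0
  have hg₁i : IntervalIntegrable g₁ volume 0 (β/2) := by
    apply ContinuousOn.intervalIntegrable
    rw [huIcc]
    exact (Continuous.continuousOn (by fun_prop)).mul hf
  have hg₂i : IntervalIntegrable g₂ volume 0 (β/2) := by
    apply ContinuousOn.intervalIntegrable
    rw [huIcc]
    exact (Continuous.continuousOn (by fun_prop)).mul hf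
  set I₁ : ℂ := ∫ t in (0:ℝ)..(β/2), g₁ t with hI₁
  set I₂ : ℂ := ∫ t in (0:ℝ)..(β/2), g₂ t with hI₂
  -- pointwise kernel factorization
  have hker : ∀ t t' : ℝ,
      conj (f t) *
          (((Real.exp (-(t + t') * a) / (1 - Real.exp (-β * a)) +
            Real.exp ((t + t' - β) * a') / (1 - Real.exp (-β * a'))) : ℝ) : ℂ) * f t'
      = (c₁:ℂ) * (conj (g₁ t) * g₁ t') + (c₂:ℂ) * (conj (g₂ t) * g₂ t') := by
    intro t t'
    have e1 : Real.exp (-(t + t') * a) = Real.exp (-(t * a)) * Real.exp (-(t' * a)) := by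
      rw [← Real.exp_add]; ring_nf
    have e2 : Real.exp ((t + t' - β) * a') =
        Real.exp (-β * a') * (Real.exp (t * a') * Real.exp (t' * a')) := by
      rw [← Real.exp_add, ← Real.exp_add]; ring_nf
    simp only [hg₁, hg₂, map_mul, Complex.conj_ofReal, hc₁, hc₂]
    rw [e1, e2]
    push_cast
    field_simp
  -- inner integral
  have hinner : ∀ t : ℝ,
      (∫ t' in (0:ℝ)..(β/2), ((c₁:ℂ) * (conj (g₁ t) * g₁ t') + (c₂:ℂ) * (conj (g₂ t) * g₂ t')))
      = (c₁:ℂ) * (conj (g₁ t) * I₁) + (c₂:ℂ) * (conj (g₂ t) * I₂) := by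
    intro t
    rw [intervalIntegral.integral_add (((hg₁i.const_mul _).const_mul _))
      (((hg₂i.const_mul _).const_mul _)),
      intervalIntegral.integral_const_mul, intervalIntegral.integral_const_mul,
      intervalIntegral.integral_const_mul, intervalIntegral.integral_const_mul]
  have hconj : ∀ (g : ℝ → ℂ), (∫ t in (0:ℝ)..(β/2), conj (g t)) = conj (∫ t in (0:ℝ)..(β/2), g t) := by
    intro g; simp [intervalIntegral, ← integral_conj]
  -- outer integral
  have houter :
      (∫ t in (0:ℝ)..(β/2), ((c₁:ℂ) * (conj (g₁ t) * I₁) + (c₂:ℂ) * (conj (g₂ t) * I₂)))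
      = (c₁:ℂ) * (conj I₁ * I₁) + (c₂:ℂ) * (conj I₂ * I₂) := by
    have h1 : IntervalIntegrable (fun t => conj (g₁ t)) volume 0 (β/2) := by
      apply ContinuousOn.intervalIntegrable
      rw [huIcc]
      exact Complex.continuous_conj.comp_continuousOn
        ((Continuous.continuousOn (by fun_prop)).mul hf)
    have h2 : IntervalIntegrable (fun t => conj (g₂ t)) volume 0 (β/2) := by
      apply ContinuousOn.intervalIntegrable
      rw [huIcc]
      exact Complex.continuous_conj.comp_continuousOn
        ((Continuous.continuousOn (by fun_prop)).mul hf)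
    have : (fun t => (c₁:ℂ) * (conj (g₁ t) * I₁) + (c₂:ℂ) * (conj (g₂ t) * I₂))
        = (fun t => ((c₁:ℂ) * I₁) * conj (g₁ t) + ((c₂:ℂ) * I₂) * conj (g₂ t)) := by
      funext t; ring
    rw [this, intervalIntegral.integral_add ((h1.const_mul _)) ((h2.const_mul _)),
      intervalIntegral.integral_const_mul, intervalIntegral.integral_const_mul,
      hconj g₁, hconj g₂, ← hI₁, ← hI₂]
    ring
  -- the main identity, in complex form
  have hmain :
      (∫ t in (0 : ℝ)..(β / 2), ∫ t' in (0 : ℝ)..(β / 2),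
        conj (f t) *
          (((Real.exp (-(t + t') * a) / (1 - Real.exp (-β * a)) +
            Real.exp ((t + t' - β) * a') / (1 - Real.exp (-β * a'))) : ℝ) : ℂ) * f t')
      = (c₁:ℂ) * (conj I₁ * I₁) + (c₂:ℂ) * (conj I₂ * I₂) := by
    rw [← houter]
    apply intervalIntegral.integral_congr
    intro t _
    simp only [hker t, hinner t]
  have habs : ∀ z : ℂ, conj z * z = ((‖z‖ ^ 2 : ℝ) : ℂ) := by
    intro z; rw [Complex.conj_mul']; norm_cast
  -- identify the exponentials in the statement with g₁, g₂
  have hI₁' : (∫ t in (0 : ℝ)..(β / 2), Complex.exp (-(t * a) : ℝ) * f t) = I₁ := by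
    apply intervalIntegral.integral_congr; intro t _
    show Complex.exp ((-(t * a) : ℝ) : ℂ) * f t = ((Real.exp (-(t * a)) : ℝ) : ℂ) * f t
    rw [Complex.ofReal_exp]
  have hI₂' : (∫ t in (0 : ℝ)..(β / 2), Complex.exp ((t * a' : ℝ)) * f t) = I₂ := by
    apply intervalIntegral.integral_congr; intro t _
    show Complex.exp ((t * a' : ℝ) : ℂ) * f t = ((Real.exp (t * a') : ℝ) : ℂ) * f t
    rw [Complex.ofReal_exp]
  have haux : ∀ x : ℝ, 0 < 1 - x → 1 + x / (1 - x) = 1 / (1 - x) := by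
    intro x h; field_simp; ring
  have hc₁' : (1 : ℝ) + Real.exp (-β * a) / (1 - Real.exp (-β * a)) = c₁ := by
    rw [hc₁]; exact haux _ hd1
  have hfinal :
      (∫ t in (0 : ℝ)..(β / 2), ∫ t' in (0 : ℝ)..(β / 2),
        conj (f t) *
          (((Real.exp (-(t + t') * a) / (1 - Real.exp (-β * a)) +
            Real.exp ((t + t' - β) * a') / (1 - Real.exp (-β * a'))) : ℝ) : ℂ) * f t')
      = (((1 + Real.exp (-β * a) / (1 - Real.exp (-β * a))) *
            ‖∫ t in (0 : ℝ)..(β / 2), Complex.exp (-(t * a) : ℝ) * f t‖ ^ 2 +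
          (Real.exp (-β * a') / (1 - Real.exp (-β * a'))) *
            ‖∫ t in (0 : ℝ)..(β / 2), Complex.exp ((t * a' : ℝ)) * f t‖ ^ 2
          : ℝ) : ℂ) := by
    rw [hmain, habs I₁, habs I₂, hI₁', hI₂', hc₁', ← Complex.ofReal_mul,
      ← Complex.ofReal_mul, ← Complex.ofReal_add]
  refine ⟨?_, ?_, hfinal⟩
  · rw [hfinal, Complex.ofReal_im]
  · rw [hfinal]
    simp only [Complex.ofReal_re]
    have h1 : (0:ℝ) ≤ 1 + Real.exp (-β * a) / (1 - Real.exp (-β * a)) := by positivity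
    have h2 : (0:ℝ) ≤ Real.exp (-β * a') / (1 - Real.exp (-β * a')) := by positivity
    positivity
end
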